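/- Let V be an n-reduced algebraic gradient on an elementwise-filtered based chain complex that generates the n-boundaries, with flow Φ. Then a cycle z ∈ Z_n is lexicographically minimal in its homology class if and only if z is Φ-invariant. -/

import Mathlib

open Classical Finset

noncomputable section

variable {𝕜 : Type} [Field 𝕜] {l : ℕ}

/-- The support of a coordinate vector: the set of basis indices with nonzero coefficient. -/
def vsupp (c : Fin l → 𝕜) : Finset (Fin l) :=
  Finset.univ.filter (fun i => c i ≠ 0)

/-- The pivot of a coordinate vector: the maximal index of its support (`⊥` if zero). -/
def vpivot (c : Fin l → 𝕜) : WithBot (Fin l) := (vsupp c).max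

/-- The lexicographic order on finite subsets of a totally ordered set. -/
def finsetLexLe {α : Type*} [LinearOrder α] (A B : Finset α) : Prop :=
  A = B ∨ ∃ h : ((A \ B) ∪ (B \ A)).Nonempty, ((A \ B) ∪ (B \ A)).max' h ∈ B

/-- The lexicographic preorder on chains, comparing supports lexicographically. -/
def chainLexLe (c₁ c₂ : Fin l → 𝕜) : Prop := finsetLexLe (vsupp c₁) (vsupp c₂)

/-- The strict lexicographic preorder on chains. -/
def chainLexLt (c₁ c₂ : Fin l → 𝕜) : Prop :=
  chainLexLe c₁ c₂ ∧ vsupp c₁ ≠ vsupp c₂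

/-- A basis element is critical if it is contained in no pair of `V`. -/
def CriticalIn {l : ℕ} (V : Finset (Fin l × Fin l)) (a : Fin l) : Prop :=
  ∀ p ∈ V, p.1 ≠ a ∧ p.2 ≠ a

/-- A based chain complex with an elementwise filtration: the basis elements are
`σ_1 < … < σ_l` (indexed by `Fin l`), `deg` records their homological degree, and `D` is the
filtration boundary matrix (the column `D _ j` represents `∂σ_j`).  Monotonicity `filt`
expresses that the down sets of the filtration order span subcomplexes, `homog` that the
boundary map decreases degree by one, and `dd` that `∂ ∘ ∂ = 0`. -/
structure BasedChainComplex (𝕜 : Type) [Field 𝕜] (l : ℕ) where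
  deg : Fin l → ℕ
  D : Matrix (Fin l) (Fin l) 𝕜
  homog : ∀ i j, D i j ≠ 0 → deg i + 1 = deg j
  filt : ∀ i j, D i j ≠ 0 → i < j
  dd : D * D = 0

namespace BasedChainComplex

variable (C : BasedChainComplex 𝕜 l)

/-- `σ_i` is a facet of `σ_j` if `⟨∂σ_j, σ_i⟩ ≠ 0`. -/
def IsFacet (i j : Fin l) : Prop := C.D i j ≠ 0

/-- An algebraic gradient: a disjoint collection `V` of facet pairs arising from an
algebraic Morse function, i.e. a monotonic function `f` on the basis such that a facet
pair `(μ, η)` satisfies `f μ = f η` iff `(μ, η) ∈ V`. -/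
def IsAlgGradient (V : Finset (Fin l × Fin l)) : Prop :=
  (∀ p ∈ V, C.IsFacet p.1 p.2) ∧
  (∀ p ∈ V, ∀ q ∈ V, p ≠ q → p.1 ≠ q.1 ∧ p.1 ≠ q.2 ∧ p.2 ≠ q.1 ∧ p.2 ≠ q.2) ∧
  (∃ f : Fin l → ℝ, (∀ i j, C.IsFacet i j → f i ≤ f j) ∧
    (∀ i j, C.IsFacet i j → (f i = f j ↔ (i, j) ∈ V)))

/-- The chain homotopy `F` of an algebraic gradient `V`: the linear map with
`F σ = −⟨∂τ, σ⟩⁻¹ · τ` if `(σ, τ) ∈ V` and `F σ = 0` otherwise. -/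
def Fmap (V : Finset (Fin l × Fin l)) (c : Fin l → 𝕜) : Fin l → 𝕜 :=
  fun j => ∑ i, (if (i, j) ∈ V then -(C.D i j)⁻¹ else 0) * c i

/-- The flow of an algebraic gradient `V`: `Φ(c) = c + ∂F(c) + F(∂c)`. -/
def flow (V : Finset (Fin l × Fin l)) (c : Fin l → 𝕜) : Fin l → 𝕜 :=
  c + C.D.mulVec (C.Fmap V c) + C.Fmap V (C.D.mulVec c)

/-- A cycle of degree `n`: a chain with `∂z = 0` supported in degree `n`. -/
def IsCycle (n : ℕ) (z : Fin l → 𝕜) : Prop :=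
  C.D.mulVec z = 0 ∧ ∀ i, z i ≠ 0 → C.deg i = n

/-- `V` is `n`-reduced: for every pair `(a, b) ∈ V` with `a` of degree `n`,
the pivot of `∂b` equals `a`. -/
def NReduced (V : Finset (Fin l × Fin l)) (n : ℕ) : Prop :=
  ∀ p ∈ V, C.deg p.1 = n → vpivot (fun i => C.D i p.2) = (p.1 : WithBot (Fin l))

/-- `V` generates the `n`-boundaries: the gradient cofacet boundaries
`{∂b : (a,b) ∈ V, deg a = n}` span the space of boundaries of degree `n`. -/
def GeneratesBoundaries (V : Finset (Fin l × Fin l)) (n : ℕ) : Prop :=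
  ∀ e : Fin l → 𝕜, (∀ i, e i ≠ 0 → C.deg i = n + 1) →
    C.D.mulVec e ∈ Submodule.span 𝕜
      {x : Fin l → 𝕜 | ∃ p ∈ V, C.deg p.1 = n ∧ x = fun i => C.D i p.2}

/-- A chain is lexicographically minimal if no homologous chain is strictly smaller
in the lexicographic preorder. -/
def LexMinimal (z : Fin l → 𝕜) : Prop :=
  ∀ e : Fin l → 𝕜, ¬ chainLexLt (z + C.D.mulVec e) z

end BasedChainComplex

end

noncomputable section AuxStmt14

variable {𝕜 : Type} [Field 𝕜] {l : ℕ}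

lemma mem_vsupp14 {c : Fin l → 𝕜} {i : Fin l} : i ∈ vsupp c ↔ c i ≠ 0 := by
  simp [vsupp]

lemma pivot_spec14 (C : BasedChainComplex 𝕜 l) {a b : Fin l}
    (hp : vpivot (fun i => C.D i b) = (a : WithBot (Fin l))) :
    C.D a b ≠ 0 ∧ ∀ i, a < i → C.D i b = 0 := by
  unfold vpivot at hp
  constructor
  · have : a ∈ vsupp (fun i => C.D i b) := Finset.mem_of_max hp
    simpa [vsupp] using this
  · intro i hi
    by_contra h
    have hm : i ∈ vsupp (fun i => C.D i b) := by simpa [vsupp] using h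
    have hle : (i : WithBot (Fin l)) ≤ (a : WithBot (Fin l)) := hp ▸ Finset.le_max hm
    exact absurd (WithBot.coe_le_coe.mp hle) (not_le.mpr hi)

lemma fst_inj14 {C : BasedChainComplex 𝕜 l} {V : Finset (Fin l × Fin l)}
    (hV : C.IsAlgGradient V) {p q : Fin l × Fin l} (hp : p ∈ V) (hq : q ∈ V)
    (h : p.1 = q.1) : p = q := by
  by_contra hne
  exact (hV.2.1 p hp q hq hne).1 h

lemma snd_inj14 {C : BasedChainComplex 𝕜 l} {V : Finset (Fin l × Fin l)}
    (hV : C.IsAlgGradient V) {p q : Fin l × Fin l} (hp : p ∈ V) (hq : q ∈ V)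
    (h : p.2 = q.2) : p = q := by
  by_contra hne
  exact (hV.2.1 p hp q hq hne).2.2.2 h

/-- Echelon lemma: a nonzero element of the span of the gradient columns has
pivot equal to some paired element `p.1`. -/
lemma span_pivot14 (C : BasedChainComplex 𝕜 l) {V : Finset (Fin l × Fin l)}
    (hV : C.IsAlgGradient V) {n : ℕ} (hred : C.NReduced V n) {x : Fin l → 𝕜}
    (hx : x ∈ Submodule.span 𝕜
      {x : Fin l → 𝕜 | ∃ p ∈ V, C.deg p.1 = n ∧ x = fun i => C.D i p.2})
    (hx0 : x ≠ 0) :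
    ∃ p ∈ V, C.deg p.1 = n ∧ x p.1 ≠ 0 ∧ ∀ i, p.1 < i → x i = 0 := by
  classical
  set T : Finset (Fin l × Fin l) := V.filter (fun p => C.deg p.1 = n) with hT
  have hTmem : ∀ p ∈ T, p ∈ V ∧ C.deg p.1 = n := by
    intro p hp; exact Finset.mem_filter.mp hp |>.imp_left id |>.imp_right id
  -- pivot facts for members of T
  have hpiv : ∀ p ∈ T, C.D p.1 p.2 ≠ 0 ∧ ∀ i, p.1 < i → C.D i p.2 = 0 := by
    intro p hp
    obtain ⟨hpV, hpd⟩ := Finset.mem_filter.mp hp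
    exact pivot_spec14 C (hred p hpV hpd)
  -- the span set is the coe of a finset image
  have hset : {x : Fin l → 𝕜 | ∃ p ∈ V, C.deg p.1 = n ∧ x = fun i => C.D i p.2}
      = ↑(T.image (fun p => (fun i => C.D i p.2))) := by
    ext v
    simp only [Set.mem_setOf_eq, Finset.coe_image, Set.mem_image, Finset.mem_coe,
      Finset.mem_filter, hT]
    constructor
    · rintro ⟨p, hp, hd, rfl⟩; exact ⟨p, ⟨hp, hd⟩, rfl⟩
    · rintro ⟨p, ⟨hp, hd⟩, rfl⟩; exact ⟨p, hp, hd, rfl⟩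
  rw [hset] at hx
  obtain ⟨f, -, hf⟩ := Submodule.mem_span_finset.mp hx
  -- injectivity of columns on T
  have hinj : ∀ p ∈ T, ∀ q ∈ T, (fun i => C.D i p.2) = (fun i => C.D i q.2) → p = q := by
    intro p hp q hq hpq
    by_contra hne
    have h1 : p.1 ≠ q.1 := (hV.2.1 p (hTmem p hp).1 q (hTmem q hq).1 hne).1
    rcases lt_or_gt_of_ne h1 with h | h
    · have : C.D q.1 p.2 = 0 := (hpiv p hp).2 q.1 h
      have h2 : C.D q.1 q.2 ≠ 0 := (hpiv q hq).1
      exact h2 (by rw [← congrFun hpq q.1] at *; exact this)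
    · have : C.D p.1 q.2 = 0 := (hpiv q hq).2 p.1 h
      have h2 : C.D p.1 p.2 ≠ 0 := (hpiv p hp).1
      exact h2 (by rw [congrFun hpq p.1]; exact this)
  rw [Finset.sum_image hinj] at hf
  set g : Fin l × Fin l → 𝕜 := fun p => f (fun i => C.D i p.2) with hg
  set T' : Finset (Fin l × Fin l) := T.filter (fun p => g p ≠ 0) with hT'
  have hf' : ∑ p ∈ T', g p • (fun i => C.D i p.2) = x := by
    rw [← hf]
    apply Finset.sum_subset (Finset.filter_subset _ _)
    intro p hp hnp
    have : g p = 0 := by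
      by_contra h
      exact hnp (Finset.mem_filter.mpr ⟨hp, h⟩)
    simp [this]
  have hT'ne : T'.Nonempty := by
    by_contra h
    rw [Finset.not_nonempty_iff_eq_empty] at h
    rw [h, Finset.sum_empty] at hf'
    exact hx0 hf'.symm
  obtain ⟨p, hpT', hpmax⟩ := Finset.exists_max_image T' (fun p => p.1) hT'ne
  have hpT : p ∈ T := (Finset.mem_filter.mp hpT').1
  refine ⟨p, (hTmem p hpT).1, (hTmem p hpT).2, ?_, ?_⟩
  · have : x p.1 = ∑ q ∈ T', g q * C.D p.1 q.2 := by
      rw [← hf']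
      rw [Finset.sum_apply]
      rfl
    rw [this, Finset.sum_eq_single p]
    · exact mul_ne_zero (Finset.mem_filter.mp hpT').2 (hpiv p hpT).1
    · intro q hq hqne
      have hqT : q ∈ T := (Finset.mem_filter.mp hq).1
      have h1 : q.1 ≠ p.1 := fun h =>
        hqne (fst_inj14 hV (hTmem q hqT).1 (hTmem p hpT).1 h)
      have hlt : q.1 < p.1 := lt_of_le_of_ne (hpmax q hq) h1
      rw [(hpiv q hqT).2 p.1 hlt, mul_zero]
    · intro h; exact absurd hpT' h
  · intro i hi
    have : x i = ∑ q ∈ T', g q * C.D i q.2 := by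
      rw [← hf', Finset.sum_apply]; rfl
    rw [this]
    apply Finset.sum_eq_zero
    intro q hq
    have hqT : q ∈ T := (Finset.mem_filter.mp hq).1
    have : q.1 < i := lt_of_le_of_lt (hpmax q hq) hi
    rw [(hpiv q hqT).2 i this, mul_zero]

/-- Helper to produce a strict lex decrease. -/
lemma finsetLexLt_of14 {α : Type*} [LinearOrder α] {A B : Finset α} {a : α}
    (haB : a ∈ B) (haA : a ∉ A) (hagree : ∀ i, a < i → (i ∈ A ↔ i ∈ B)) :
    finsetLexLe A B ∧ A ≠ B := by
  have haS : a ∈ ((A \ B) ∪ (B \ A)) :=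
    Finset.mem_union_right _ (Finset.mem_sdiff.mpr ⟨haB, haA⟩)
  have hSne : ((A \ B) ∪ (B \ A)).Nonempty := ⟨a, haS⟩
  have hmax : ((A \ B) ∪ (B \ A)).max' hSne = a := by
    apply le_antisymm
    · apply Finset.max'_le
      intro i hiS
      by_contra h
      have hlt : a < i := lt_of_not_ge h
      have heq := hagree i hlt
      rcases Finset.mem_union.mp hiS with h' | h'
      · obtain ⟨h1, h2⟩ := Finset.mem_sdiff.mp h'
        exact h2 (heq.mp h1)
      · obtain ⟨h1, h2⟩ := Finset.mem_sdiff.mp h'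
        exact h2 (heq.mpr h1)
    · exact Finset.le_max' _ _ haS
  refine ⟨Or.inr ⟨hSne, ?_⟩, ?_⟩
  · rw [hmax]; exact haB
  · intro h
    rw [h] at haA
    exact haA haB

lemma finsetLexLt_dest14 {α : Type*} [LinearOrder α] {A B : Finset α}
    (h : finsetLexLe A B) (hne : A ≠ B) :
    ∃ a, a ∈ B ∧ a ∉ A ∧ ∀ i, a < i → (i ∈ A ↔ i ∈ B) := by
  rcases h with h | ⟨hSne, hmem⟩
  · exact absurd h hne
  refine ⟨((A \ B) ∪ (B \ A)).max' hSne, hmem, ?_, ?_⟩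
  · have hm := Finset.max'_mem _ hSne
    rcases Finset.mem_union.mp hm with h' | h'
    · exact absurd hmem (Finset.mem_sdiff.mp h').2
    · exact (Finset.mem_sdiff.mp h').2
  · intro i hlt
    constructor
    · intro hiA
      by_contra hiB
      have : i ∈ ((A \ B) ∪ (B \ A)) :=
        Finset.mem_union_left _ (Finset.mem_sdiff.mpr ⟨hiA, hiB⟩)
      exact absurd (Finset.le_max' _ _ this) (not_le.mpr hlt)
    · intro hiB
      by_contra hiA
      have : i ∈ ((A \ B) ∪ (B \ A)) :=
        Finset.mem_union_right _ (Finset.mem_sdiff.mpr ⟨hiB, hiA⟩)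
      exact absurd (Finset.le_max' _ _ this) (not_le.mpr hlt)

/-- Helper to produce a strict lex decrease. -/
lemma lexLt_of14 {z' z : Fin l → 𝕜} {a : Fin l} (hza : z a ≠ 0) (hz'a : z' a = 0)
    (hagree : ∀ i, a < i → z' i = z i) : chainLexLt z' z := by
  have haB : a ∈ vsupp z := mem_vsupp14.mpr hza
  have haA : a ∉ vsupp z' := by simp [vsupp, hz'a]
  have h := finsetLexLt_of14 haB haA (fun i hi => by
    rw [mem_vsupp14, mem_vsupp14, hagree i hi])
  exact ⟨h.1, h.2⟩

lemma lexLt_dest14 {z' z : Fin l → 𝕜} (h : chainLexLt z' z) :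
    ∃ a, z a ≠ 0 ∧ z' a = 0 ∧ ∀ i, a < i → (z' i ≠ 0 ↔ z i ≠ 0) := by
  obtain ⟨a, haB, haA, hagree⟩ := finsetLexLt_dest14 h.1 h.2
  refine ⟨a, mem_vsupp14.mp haB, ?_, ?_⟩
  · by_contra hne
    exact haA (mem_vsupp14.mpr hne)
  · intro i hi
    have := hagree i hi
    rw [mem_vsupp14, mem_vsupp14] at this
    exact this

end AuxStmt14


/-- For an `n`-reduced algebraic gradient `V` generating the `n`-boundaries, with flow
`Φ`, a cycle `z ∈ Z_n` is lexicographically minimal in its homology class if and only if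
`z` is `Φ`-invariant. -/
theorem stmt14 {𝕜 : Type} [Field 𝕜] {l : ℕ} (C : BasedChainComplex 𝕜 l)
    (V : Finset (Fin l × Fin l)) (hV : C.IsAlgGradient V)
    (n : ℕ) (hred : C.NReduced V n) (hgen : C.GeneratesBoundaries V n)
    (z : Fin l → 𝕜) (hz : C.IsCycle n z) :
    C.LexMinimal z ↔ C.flow V z = z := by
  classical
  obtain ⟨hcyc, hdeg⟩ := hz
  -- flow fixed-point reformulation
  have hF0 : C.Fmap V (C.D.mulVec z) = 0 := by
    rw [hcyc]
    funext j
    simp [BasedChainComplex.Fmap]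
  have hflow : C.flow V z = z ↔ C.D.mulVec (C.Fmap V z) = 0 := by
    unfold BasedChainComplex.flow
    rw [hF0, add_zero, add_eq_left]
  -- key: flow invariance iff no paired element in the support of z
  have keyflow : C.D.mulVec (C.Fmap V z) = 0 ↔ ∀ p ∈ V, z p.1 = 0 := by
    constructor
    · -- contrapositive
      intro h0
      by_contra hcon
      push_neg at hcon
      obtain ⟨p0, hp0V, hp0z⟩ := hcon
      set T : Finset (Fin l × Fin l) := V.filter (fun p => z p.1 ≠ 0) with hT
      have hTne : T.Nonempty := ⟨p0, Finset.mem_filter.mpr ⟨hp0V, hp0z⟩⟩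
      obtain ⟨p, hpT, hpmax⟩ := Finset.exists_max_image T (fun p => p.1) hTne
      obtain ⟨hpV, hpz⟩ := Finset.mem_filter.mp hpT
      have hDab : C.D p.1 p.2 ≠ 0 := hV.1 p hpV
      have hval : (C.D.mulVec (C.Fmap V z)) p.1 = -z p.1 := by
        show (∑ j, C.D p.1 j * C.Fmap V z j) = -z p.1
        rw [Finset.sum_eq_single p.2]
        · unfold BasedChainComplex.Fmap
          rw [Finset.sum_eq_single p.1]
          · rw [if_pos (show (p.1, p.2) ∈ V from hpV)]
            field_simp
          · intro i _ hine
            have : (i, p.2) ∉ V := by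
              intro hmem
              exact hine (congrArg Prod.fst (snd_inj14 hV hmem hpV rfl))
            rw [if_neg this, zero_mul]
          · intro h; exact absurd (Finset.mem_univ _) h
        · intro j _ hjne
          unfold BasedChainComplex.Fmap
          rw [Finset.mul_sum]
          apply Finset.sum_eq_zero
          intro i _
          by_cases hij : (i, j) ∈ V
          · by_cases hzi : z i = 0
            · rw [hzi]; ring
            · have hiT : (i, j) ∈ T := Finset.mem_filter.mpr ⟨hij, hzi⟩
              have hile : i ≤ p.1 := hpmax (i, j) hiT
              have hine : i ≠ p.1 := by
                intro h
                exact hjne (congrArg Prod.snd (fst_inj14 hV hij hpV h))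
              have hilt : i < p.1 := lt_of_le_of_ne hile hine
              have hdi : C.deg i = n := hdeg i hzi
              have := (pivot_spec14 C (hred (i, j) hij hdi)).2 p.1 hilt
              rw [this]; ring
          · rw [if_neg hij]; ring
        · intro h; exact absurd (Finset.mem_univ _) h
      have := congrFun h0 p.1
      rw [hval] at this
      exact hpz (neg_eq_zero.mp this)
    · intro h0
      have hFz : C.Fmap V z = 0 := by
        funext j
        apply Finset.sum_eq_zero
        intro i _
        by_cases hij : (i, j) ∈ V
        · rw [h0 (i, j) hij, mul_zero]
        · rw [if_neg hij, zero_mul]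
      rw [hFz, Matrix.mulVec_zero]
  -- key: lex minimality iff no paired element in the support of z
  have keylex : C.LexMinimal z ↔ ∀ p ∈ V, z p.1 = 0 := by
    constructor
    · intro hlex
      by_contra hcon
      push_neg at hcon
      obtain ⟨p, hpV, hpz⟩ := hcon
      have hdp : C.deg p.1 = n := hdeg p.1 hpz
      obtain ⟨hDab, hDabove⟩ := pivot_spec14 C (hred p hpV hdp)
      set e : Fin l → 𝕜 := fun j => if j = p.2 then -(z p.1) * (C.D p.1 p.2)⁻¹ else 0
        with he
      have hmv : ∀ i, (C.D.mulVec e) i = C.D i p.2 * (-(z p.1) * (C.D p.1 p.2)⁻¹) := by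
        intro i
        show (∑ j, C.D i j * e j) = _
        rw [Finset.sum_eq_single p.2]
        · rw [he]; simp
        · intro j _ hjne
          rw [he]; simp [hjne]
        · intro h; exact absurd (Finset.mem_univ _) h
      refine hlex e (lexLt_of14 hpz ?_ ?_)
      · show z p.1 + (C.D.mulVec e) p.1 = 0
        rw [hmv p.1]
        field_simp
        ring
      · intro i hi
        show z i + (C.D.mulVec e) i = z i
        rw [hmv i, hDabove i hi]
        ring
    · intro h0 e hlt
      obtain ⟨m, hzm, hz'm, hagree⟩ := lexLt_dest14 hlt
      have hbm : (C.D.mulVec e) m = -z m := by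
        have h : z m + (C.D.mulVec e) m = 0 := hz'm
        exact eq_neg_of_add_eq_zero_right h
      have hdm : C.deg m = n := hdeg m hzm
      set e' : Fin l → 𝕜 := fun j => if C.deg j = n + 1 then e j else 0 with he'
      have he'deg : ∀ i, e' i ≠ 0 → C.deg i = n + 1 := by
        intro i hi
        rw [he'] at hi
        by_contra h
        simp [h] at hi
      -- the degree-n part of ∂e
      have heq : ∀ i, C.deg i = n → (C.D.mulVec e') i = (C.D.mulVec e) i := by
        intro i hi
        show (∑ j, C.D i j * e' j) = ∑ j, C.D i j * e j
        apply Finset.sum_congr rfl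
        intro j _
        by_cases hD : C.D i j = 0
        · rw [hD, zero_mul, zero_mul]
        · have : C.deg j = n + 1 := by rw [← C.homog i j hD, hi]
          rw [he']
          simp [this]
      have hb'deg : ∀ i, (C.D.mulVec e') i ≠ 0 → C.deg i = n := by
        intro i hi
        obtain ⟨j, _, hj⟩ := Finset.exists_ne_zero_of_sum_ne_zero
          (show (∑ j, C.D i j * e' j) ≠ 0 from hi)
        have hD : C.D i j ≠ 0 := fun h => hj (by rw [h, zero_mul])
        have hE : e' j ≠ 0 := fun h => hj (by rw [h, mul_zero])
        have := C.homog i j hD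
        have := he'deg j hE
        omega
      have hspan := hgen e' he'deg
      have hb'm : (C.D.mulVec e') m = -z m := by rw [heq m hdm, hbm]
      have hb'ne : C.D.mulVec e' ≠ 0 := by
        intro h
        have := congrFun h m
        rw [hb'm] at this
        exact hzm (neg_eq_zero.mp this)
      obtain ⟨p, hpV, hdp, hbp, habove⟩ := span_pivot14 C hV hred hspan hb'ne
      have hmle : m ≤ p.1 := by
        by_contra h
        push_neg at h
        have := habove m h
        rw [hb'm] at this
        exact hzm (neg_eq_zero.mp this)
      have hzp : z p.1 = 0 := h0 p hpV
      rcases eq_or_lt_of_le hmle with h | h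
      · rw [← h] at hzp
        exact hzm hzp
      · have hiff := hagree p.1 h
        have hz'p : (z + C.D.mulVec e) p.1 = 0 := by
          by_contra hne
          exact (hiff.mp hne) hzp
        have hbep : (C.D.mulVec e) p.1 = 0 := by
          have : z p.1 + (C.D.mulVec e) p.1 = 0 := hz'p
          rw [hzp, zero_add] at this
          exact this
        rw [heq p.1 hdp, hbep] at hbp
        exact hbp rfl
  rw [keylex, hflow, keyflow]
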